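/- Suppose 5 points on a 2-sphere in ℝ³ have diameter 1. Then the number of unordered pairs at distance exactly 1 is at most 7. -/

import Mathlib

set_option maxHeartbeats 4000000

local notation "⟪" x ", " y "⟫" => @inner ℝ _ _ x y

/-- Any four vectors in `ℝ³` are linearly dependent. -/
lemma dep4 (v0 v1 v2 v3 : EuclideanSpace ℝ (Fin 3)) :
    ∃ g0 g1 g2 g3 : ℝ, g0 • v0 + g1 • v1 + g2 • v2 + g3 • v3 = 0 ∧
      (g0 ≠ 0 ∨ g1 ≠ 0 ∨ g2 ≠ 0 ∨ g3 ≠ 0) := by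
  have h : ¬ LinearIndependent ℝ ![v0, v1, v2, v3] := by
    intro h
    have := h.fintype_card_le_finrank
    simp [finrank_euclideanSpace] at this
  rw [Fintype.not_linearIndependent_iff] at h
  obtain ⟨g, hsum, i, hi⟩ := h
  refine ⟨g 0, g 1, g 2, g 3, ?_, ?_⟩
  · simpa [Fin.sum_univ_four] using hsum
  · fin_cases i <;> simp_all

lemma eq_of_inner {E : Type*} [NormedAddCommGroup E] [InnerProductSpace ℝ E]
    {t : ℝ} {x y : E}
    (hx : ⟪x, x⟫ = t) (hy : ⟪y, y⟫ = t) (hxy : ⟪x, y⟫ = t) : x = y := by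
  have hyx : ⟪y, x⟫ = t := by rw [real_inner_comm]; exact hxy
  have h0 : ⟪x - y, x - y⟫ = (0:ℝ) := by
    simp only [inner_sub_left, inner_sub_right, hx, hy, hxy, hyx]; ring
  exact sub_eq_zero.mp (inner_self_eq_zero.mp h0)

/-- Triangle `a b c` at pairwise unit distance, all three unit from the pivot `p`,
a fourth point `d` unit from `p` and from `a`, all on a sphere centered at the
origin: forces `d = b` or `d = c`.  (Everything phrased with inner products;
the two linear dependencies of quadruples of vectors in `ℝ³` are hypotheses.) -/
lemma K1 {E : Type*} [NormedAddCommGroup E] [InnerProductSpace ℝ E]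
    {t : ℝ} {p a b c d : E} {g0 g1 g2 g3 f0 f1 f2 f3 : ℝ}
    (hsum1 : g0 • p + g1 • a + g2 • b + g3 • c = 0)
    (hnt1 : g0 ≠ 0 ∨ g1 ≠ 0 ∨ g2 ≠ 0 ∨ g3 ≠ 0)
    (hsum2 : f0 • p + f1 • a + f2 • (b - c) + f3 • (b - d) = 0)
    (hnt2 : f0 ≠ 0 ∨ f1 ≠ 0 ∨ f2 ≠ 0 ∨ f3 ≠ 0)
    (hp : ⟪p, p⟫ = t) (ha : ⟪a, a⟫ = t) (hb : ⟪b, b⟫ = t) (hc : ⟪c, c⟫ = t) (hd : ⟪d, d⟫ = t)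
    (hpa : ⟪p, a⟫ = t - 2⁻¹) (hpb : ⟪p, b⟫ = t - 2⁻¹) (hpc : ⟪p, c⟫ = t - 2⁻¹)
    (hpd : ⟪p, d⟫ = t - 2⁻¹)
    (hab : ⟪a, b⟫ = t - 2⁻¹) (hac : ⟪a, c⟫ = t - 2⁻¹) (hbc : ⟪b, c⟫ = t - 2⁻¹)
    (had : ⟪a, d⟫ = t - 2⁻¹)
    (hbd' : b ≠ d) (hcd' : c ≠ d) : False := by
  have hap : ⟪a, p⟫ = t - 2⁻¹ := by rw [real_inner_comm]; exact hpa
  have hbp : ⟪b, p⟫ = t - 2⁻¹ := by rw [real_inner_comm]; exact hpb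
  have hcp : ⟪c, p⟫ = t - 2⁻¹ := by rw [real_inner_comm]; exact hpc
  have hdp : ⟪d, p⟫ = t - 2⁻¹ := by rw [real_inner_comm]; exact hpd
  have hba : ⟪b, a⟫ = t - 2⁻¹ := by rw [real_inner_comm]; exact hab
  have hca : ⟪c, a⟫ = t - 2⁻¹ := by rw [real_inner_comm]; exact hac
  have hda : ⟪d, a⟫ = t - 2⁻¹ := by rw [real_inner_comm]; exact had
  have hcb : ⟪c, b⟫ = t - 2⁻¹ := by rw [real_inner_comm]; exact hbc
  have hdb : ⟪d, b⟫ = ⟪b, d⟫ := real_inner_comm _ _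
  have hdc : ⟪d, c⟫ = ⟪c, d⟫ := real_inner_comm _ _
  -- Step A : t = 3/8, since p a b c is a unit regular tetrahedron
  have ht : t = 3/8 := by
    have Ep := congrArg (fun z => ⟪z, p⟫) hsum1
    have Ea := congrArg (fun z => ⟪z, a⟫) hsum1
    have Eb := congrArg (fun z => ⟪z, b⟫) hsum1
    have Ec := congrArg (fun z => ⟪z, c⟫) hsum1
    simp only [inner_add_left, real_inner_smul_left, inner_zero_left,
      hp, ha, hb, hc, hpa, hpb, hpc, hap, hbp, hcp, hab, hac, hba, hca, hbc, hcb]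
      at Ep Ea Eb Ec
    have h01 : g1 = g0 := by linear_combination 2*Ea - 2*Ep
    have h02 : g2 = g0 := by linear_combination 2*Eb - 2*Ep
    have h03 : g3 = g0 := by linear_combination 2*Ec - 2*Ep
    have hg0 : g0 ≠ 0 := by rcases hnt1 with h|h|h|h <;> simp_all
    have hmul : g0 * (4*t - 3/2) = 0 := by
      linear_combination Ep - (t - 2⁻¹) * (h01 + h02 + h03)
    rcases mul_eq_zero.mp hmul with h | h
    · exact absurd h hg0
    · linarith
  subst ht
  -- Step B : d coincides with b or c
  have Fp := congrArg (fun z => ⟪z, p⟫) hsum2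
  have Fa := congrArg (fun z => ⟪z, a⟫) hsum2
  have Fb := congrArg (fun z => ⟪z, b⟫) hsum2
  have Fc := congrArg (fun z => ⟪z, c⟫) hsum2
  have Fd := congrArg (fun z => ⟪z, d⟫) hsum2
  simp only [inner_add_left, inner_sub_left, real_inner_smul_left, inner_zero_left,
    hp, ha, hb, hc, hd, hpa, hpb, hpc, hpd, hap, hbp, hcp, hdp,
    hab, hac, had, hba, hca, hda, hbc, hcb, hdb, hdc] at Fp
  simp only [inner_add_left, inner_sub_left, real_inner_smul_left, inner_zero_left,
    hp, ha, hb, hc, hd, hpa, hpb, hpc, hpd, hap, hbp, hcp, hdp,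
    hab, hac, had, hba, hca, hda, hbc, hcb, hdb, hdc] at Fa
  simp only [inner_add_left, inner_sub_left, real_inner_smul_left, inner_zero_left,
    hp, ha, hb, hc, hd, hpa, hpb, hpc, hpd, hap, hbp, hcp, hdp,
    hab, hac, had, hba, hca, hda, hbc, hcb, hdb, hdc] at Fb
  simp only [inner_add_left, inner_sub_left, real_inner_smul_left, inner_zero_left,
    hp, ha, hb, hc, hd, hpa, hpb, hpc, hpd, hap, hbp, hcp, hdp,
    hab, hac, had, hba, hca, hda, hbc, hcb, hdb, hdc] at Fc
  simp only [inner_add_left, inner_sub_left, real_inner_smul_left, inner_zero_left,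
    hp, ha, hb, hc, hd, hpa, hpb, hpc, hpd, hap, hbp, hcp, hdp,
    hab, hac, had, hba, hca, hda, hbc, hcb, hdb, hdc] at Fd
  have hf0 : f0 = 0 := by linear_combination 3*Fp + Fa
  have hf1 : f1 = 0 := by linear_combination Fp + 3*Fa
  by_cases hf3 : f3 = 0
  · have hf2 : f2 = 0 := by
      linear_combination 2*Fb - (3/4 - 2 * 2⁻¹)*hf0 - (3/4 - 2*2⁻¹)*hf1
        - 2*(3/8 - ⟪b, d⟫)*hf3
    rcases hnt2 with h|h|h|h <;> simp_all
  · by_cases hf2 : f2 = 0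
    · have hx : ⟪b, d⟫ = 3/8 := by
        have h := Fb
        rw [hf0, hf1, hf2] at h
        have h' : f3 * (3/8 - ⟪b, d⟫) = 0 := by linear_combination h
        rcases mul_eq_zero.mp h' with h'' | h''
        · exact absurd h'' hf3
        · linarith
      exact hbd' (eq_of_inner hb hd hx)
    · have hsum1' : f3 * (3/8 + (3/8 - 2⁻¹) - ⟪b, d⟫ - ⟪c, d⟫) = 0 := by
        linear_combination Fb + Fc - 2*(3/8 - 2⁻¹)*hf0 - 2*(3/8 - 2⁻¹)*hf1
      have hsum2' : f2 * (3/8 - (3/8 - 2⁻¹) + ⟪b, d⟫ - ⟪c, d⟫) = 0 := by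
        linear_combination Fb + Fd - 2*(3/8 - 2⁻¹)*hf0 - 2*(3/8 - 2⁻¹)*hf1
      have e1 : ⟪b, d⟫ + ⟪c, d⟫ = 1/4 := by
        rcases mul_eq_zero.mp hsum1' with h' | h'
        · exact absurd h' hf3
        · linarith
      have e2 : ⟪c, d⟫ - ⟪b, d⟫ = 1/2 := by
        rcases mul_eq_zero.mp hsum2' with h' | h'
        · exact absurd h' hf2
        · linarith
      have hy : ⟪c, d⟫ = 3/8 := by linarith
      exact hcd' (eq_of_inner hc hd hy)

/-- A four-cycle `a-b-c-d` of unit distances, all four points at unit distance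
from a pivot `p`, all on a common sphere centered at the origin, with
`dist b d ≤ 1`: impossible. -/
lemma K2 {E : Type*} [NormedAddCommGroup E] [InnerProductSpace ℝ E]
    {t : ℝ} {p a b c d : E} {g0 g1 g2 g3 : ℝ}
    (hsum : g0 • p + g1 • (a - c) + g2 • (t • b - (t - 2⁻¹) • p)
      + g3 • (t • d - (t - 2⁻¹) • p) = 0)
    (hnt : g0 ≠ 0 ∨ g1 ≠ 0 ∨ g2 ≠ 0 ∨ g3 ≠ 0)
    (hp : ⟪p, p⟫ = t) (ha : ⟪a, a⟫ = t) (hb : ⟪b, b⟫ = t) (hc : ⟪c, c⟫ = t) (hd : ⟪d, d⟫ = t)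
    (hpa : ⟪p, a⟫ = t - 2⁻¹) (hpb : ⟪p, b⟫ = t - 2⁻¹) (hpc : ⟪p, c⟫ = t - 2⁻¹)
    (hpd : ⟪p, d⟫ = t - 2⁻¹)
    (hab : ⟪a, b⟫ = t - 2⁻¹) (hbc : ⟪b, c⟫ = t - 2⁻¹) (hcd : ⟪c, d⟫ = t - 2⁻¹)
    (had : ⟪a, d⟫ = t - 2⁻¹)
    (hwge : t - 2⁻¹ ≤ ⟪b, d⟫)
    (hac' : a ≠ c) (hbd' : b ≠ d) : False := by
  have hap : ⟪a, p⟫ = t - 2⁻¹ := by rw [real_inner_comm]; exact hpa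
  have hbp : ⟪b, p⟫ = t - 2⁻¹ := by rw [real_inner_comm]; exact hpb
  have hcp : ⟪c, p⟫ = t - 2⁻¹ := by rw [real_inner_comm]; exact hpc
  have hdp : ⟪d, p⟫ = t - 2⁻¹ := by rw [real_inner_comm]; exact hpd
  have hba : ⟪b, a⟫ = t - 2⁻¹ := by rw [real_inner_comm]; exact hab
  have hcb : ⟪c, b⟫ = t - 2⁻¹ := by rw [real_inner_comm]; exact hbc
  have hdc : ⟪d, c⟫ = t - 2⁻¹ := by rw [real_inner_comm]; exact hcd
  have hda : ⟪d, a⟫ = t - 2⁻¹ := by rw [real_inner_comm]; exact had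
  have hdb : ⟪d, b⟫ = ⟪b, d⟫ := real_inner_comm _ _
  have hca : ⟪c, a⟫ = ⟪a, c⟫ := real_inner_comm _ _
  have ht0 : t ≠ 0 := by
    intro h
    apply hbd'
    have hb0 : b = 0 := inner_self_eq_zero.mp (by rw [hb, h])
    have hd0 : d = 0 := inner_self_eq_zero.mp (by rw [hd, h])
    rw [hb0, hd0]
  have hxlt : ⟪a, c⟫ < t := by
    have h1 : ⟪a - c, a - c⟫ ≠ (0:ℝ) := fun h =>
      hac' (sub_eq_zero.mp (inner_self_eq_zero.mp h))
    have h2 : (0:ℝ) ≤ ⟪a - c, a - c⟫ := real_inner_self_nonneg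
    have h3 : ⟪a - c, a - c⟫ = 2*t - 2*⟪a, c⟫ := by
      simp only [inner_sub_left, inner_sub_right, ha, hc, hca]
      ring
    have h4 : (0:ℝ) < 2*t - 2*⟪a, c⟫ := by rw [← h3]; exact h2.lt_of_ne (Ne.symm h1)
    linarith
  have hwlt : ⟪b, d⟫ < t := by
    have h1 : ⟪b - d, b - d⟫ ≠ (0:ℝ) := fun h =>
      hbd' (sub_eq_zero.mp (inner_self_eq_zero.mp h))
    have h2 : (0:ℝ) ≤ ⟪b - d, b - d⟫ := real_inner_self_nonneg
    have h3 : ⟪b - d, b - d⟫ = 2*t - 2*⟪b, d⟫ := by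
      simp only [inner_sub_left, inner_sub_right, hb, hd, hdb]
      ring
    have h4 : (0:ℝ) < 2*t - 2*⟪b, d⟫ := by rw [← h3]; exact h2.lt_of_ne (Ne.symm h1)
    linarith
  have Ep := congrArg (fun z => ⟪z, p⟫) hsum
  have Ea := congrArg (fun z => ⟪z, a⟫) hsum
  have Ec := congrArg (fun z => ⟪z, c⟫) hsum
  have Eb := congrArg (fun z => ⟪z, b⟫) hsum
  have Ed := congrArg (fun z => ⟪z, d⟫) hsum
  simp only [inner_add_left, inner_sub_left, real_inner_smul_left, inner_zero_left,
    hp, ha, hb, hc, hd, hpa, hpb, hpc, hpd, hap, hbp, hcp, hdp,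
    hab, hba, hbc, hcb, hcd, hdc, had, hda, hdb, hca] at Ep
  simp only [inner_add_left, inner_sub_left, real_inner_smul_left, inner_zero_left,
    hp, ha, hb, hc, hd, hpa, hpb, hpc, hpd, hap, hbp, hcp, hdp,
    hab, hba, hbc, hcb, hcd, hdc, had, hda, hdb, hca] at Ea
  simp only [inner_add_left, inner_sub_left, real_inner_smul_left, inner_zero_left,
    hp, ha, hb, hc, hd, hpa, hpb, hpc, hpd, hap, hbp, hcp, hdp,
    hab, hba, hbc, hcb, hcd, hdc, had, hda, hdb, hca] at Ec
  simp only [inner_add_left, inner_sub_left, real_inner_smul_left, inner_zero_left,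
    hp, ha, hb, hc, hd, hpa, hpb, hpc, hpd, hap, hbp, hcp, hdp,
    hab, hba, hbc, hcb, hcd, hdc, had, hda, hdb, hca] at Eb
  simp only [inner_add_left, inner_sub_left, real_inner_smul_left, inner_zero_left,
    hp, ha, hb, hc, hd, hpa, hpb, hpc, hpd, hap, hbp, hcp, hdp,
    hab, hba, hbc, hcb, hcd, hdc, had, hda, hdb, hca] at Ed
  have hg0 : g0 = 0 := by
    have h : g0 * t = 0 := by linear_combination Ep
    rcases mul_eq_zero.mp h with h' | h'
    · exact h'
    · exact absurd h' ht0
  have hg1 : g1 = 0 := by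
    have h : g1 * (2*t - 2*⟪a, c⟫) = 0 := by linear_combination Ea - Ec
    rcases mul_eq_zero.mp h with h' | h'
    · exact h'
    · linarith
  have hg23 : g2 = g3 := by
    have h : (g2 - g3) * (t * (t - ⟪b, d⟫)) = 0 := by
      linear_combination Eb - Ed
    rcases mul_eq_zero.mp h with h' | h'
    · linarith
    · rcases mul_eq_zero.mp h' with h'' | h''
      · exact absurd h'' ht0
      · linarith
  have hg2 : g2 ≠ 0 := by
    rcases hnt with h|h|h|h
    · exact absurd hg0 h
    · exact absurd hg1 h
    · exact h
    · rw [← hg23] at h; exact h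
  have hq : t - 2⁻¹ = 0 := by
    have h : (g2 + g3) * ((t - 2⁻¹) * 2⁻¹) = 0 := by
      linear_combination Ea - (t - 2⁻¹)*hg0 - (t - ⟪a, c⟫)*hg1
    rcases mul_eq_zero.mp h with h' | h'
    · rw [hg23] at h'
      have h'' : g3 = 0 := by linarith
      rw [← hg23] at h''
      exact absurd h'' hg2
    · rcases mul_eq_zero.mp h' with h'' | h''
      · exact h''
      · norm_num at h''
  have hw : t + ⟪b, d⟫ = 0 := by
    have h : (g2 + g3) * (t * (t + ⟪b, d⟫) - 2*(t - 2⁻¹)^2) = 0 := by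
      linear_combination Eb + Ed - 2*(t-2⁻¹)*hg0
    rcases mul_eq_zero.mp h with h' | h'
    · rw [hg23] at h'
      have h'' : g3 = 0 := by linarith
      rw [← hg23] at h''
      exact absurd h'' hg2
    · have h2 : t * (t + ⟪b, d⟫) = 0 := by
        linear_combination h' + 2*(t - 2⁻¹)*hq
      rcases mul_eq_zero.mp h2 with h'' | h''
      · exact absurd h'' ht0
      · exact h''
  linarith

/-- A finset of ordered pairs which is symmetric and contains no diagonal pair
has even cardinality. -/
lemma even_card_of_symm {α : Type*} [DecidableEq α] :
    ∀ (n : ℕ) (N : Finset (α × α)), N.card = n →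
      (∀ p ∈ N, Prod.swap p ∈ N) → (∀ p ∈ N, p.1 ≠ p.2) → Even n := by
  intro n
  induction n using Nat.strong_induction_on with
  | _ n ih =>
    intro N hn hsym hne
    rcases N.eq_empty_or_nonempty with rfl | ⟨p, hp⟩
    · rw [Finset.card_empty] at hn; exact hn ▸ Even.zero
    · have hps : p.swap ∈ N := hsym p hp
      have hpp : p ≠ p.swap := by
        intro h
        exact hne p hp (congrArg Prod.fst h)
      have hsub : ({p, p.swap} : Finset (α × α)) ⊆ N := by
        intro q hq
        rcases Finset.mem_insert.mp hq with rfl | hq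
        · exact hp
        · rw [Finset.mem_singleton] at hq; subst hq; exact hps
      have hMcard : (N \ {p, p.swap}).card = n - 2 := by
        rw [Finset.card_sdiff_of_subset hsub, Finset.card_pair hpp, hn]
      have h2n : 2 ≤ n := by
        rw [← hn, ← Finset.card_pair hpp]
        exact Finset.card_le_card hsub
      have hevM : Even (n - 2) := by
        refine ih (n - 2) (by omega) (N \ {p, p.swap}) hMcard ?_ ?_
        · intro q hq
          rw [Finset.mem_sdiff] at hq ⊢
          refine ⟨hsym q hq.1, fun hmem => hq.2 ?_⟩
          rcases Finset.mem_insert.mp hmem with h | h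
          · have : q = p.swap := by rw [← h, Prod.swap_swap]
            simp [this]
          · rw [Finset.mem_singleton] at h
            have : q = p := Prod.swap_injective h
            simp [this]
        · exact fun q hq => hne q (Finset.mem_sdiff.mp hq).1
      obtain ⟨k, hk⟩ := hevM
      exact ⟨k + 1, by omega⟩

/-- If a symmetric finset of pairs contains three distinct unordered pairs, it
has at least six elements. -/
lemma no_three_bad {α : Type*} [DecidableEq α] {N : Finset (α × α)} (hcard : N.card ≤ 4)
    (hsym : ∀ p ∈ N, Prod.swap p ∈ N)
    {x1 y1 x2 y2 x3 y3 : α}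
    (m1 : (x1, y1) ∈ N) (m2 : (x2, y2) ∈ N) (m3 : (x3, y3) ∈ N)
    (h1 : x1 ≠ y1) (h2 : x2 ≠ y2) (h3 : x3 ≠ y3)
    (d12 : ¬(x1 = x2 ∧ y1 = y2)) (d12' : ¬(x1 = y2 ∧ y1 = x2))
    (d13 : ¬(x1 = x3 ∧ y1 = y3)) (d13' : ¬(x1 = y3 ∧ y1 = x3))
    (d23 : ¬(x2 = x3 ∧ y2 = y3)) (d23' : ¬(x2 = y3 ∧ y2 = x3)) : False := by
  have hsub : ({(x1,y1),(y1,x1),(x2,y2),(y2,x2),(x3,y3),(y3,x3)} : Finset (α × α)) ⊆ N := by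
    intro q hq
    simp only [Finset.mem_insert, Finset.mem_singleton] at hq
    rcases hq with rfl|rfl|rfl|rfl|rfl|rfl
    · exact m1
    · exact hsym _ m1
    · exact m2
    · exact hsym _ m2
    · exact m3
    · exact hsym _ m3
  have e4 : ((x3,y3) : α × α) ∉ ({(y3,x3)} : Finset (α × α)) := by
    simp [Prod.ext_iff]; tauto
  have e3 : ((y2,x2) : α × α) ∉ ({(x3,y3),(y3,x3)} : Finset (α × α)) := by
    simp [Prod.ext_iff]; tauto
  have e2 : ((x2,y2) : α × α) ∉ ({(y2,x2),(x3,y3),(y3,x3)} : Finset (α × α)) := by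
    simp [Prod.ext_iff]; tauto
  have e1 : ((y1,x1) : α × α) ∉ ({(x2,y2),(y2,x2),(x3,y3),(y3,x3)} : Finset (α × α)) := by
    simp [Prod.ext_iff]; tauto
  have e0 : ((x1,y1) : α × α) ∉
      ({(y1,x1),(x2,y2),(y2,x2),(x3,y3),(y3,x3)} : Finset (α × α)) := by
    simp [Prod.ext_iff]; tauto
  have hc : ({(x1,y1),(y1,x1),(x2,y2),(y2,x2),(x3,y3),(y3,x3)} : Finset (α × α)).card = 6 := by
    rw [Finset.card_insert_of_notMem e0, Finset.card_insert_of_notMem e1,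
      Finset.card_insert_of_notMem e2, Finset.card_insert_of_notMem e3,
      Finset.card_insert_of_notMem e4, Finset.card_singleton]
  have := Finset.card_le_card hsub
  omega

/-- The combinatorial case analysis over the unit-distance graph on four
points, given the two geometric impossibility oracles and the counting oracle. -/
lemma core {α : Type*} (M Q : α → Prop) (f : α → α → ℝ)
    (a b c d : α)
    (haS : M a) (hbS : M b) (hcS : M c) (hdS : M d)
    (hae : Q a) (hbe : Q b) (hce : Q c) (hde : Q d)
    (hab' : a ≠ b) (hac' : a ≠ c) (had' : a ≠ d)
    (hbc' : b ≠ c) (hbd' : b ≠ d) (hcd' : c ≠ d)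
    (hfc : ∀ x y : α, f x y = f y x)
    (no3 : ∀ x1 y1 x2 y2 x3 y3 : α, M x1 → M y1 → M x2 → M y2 → M x3 → M y3 →
      x1 ≠ y1 → x2 ≠ y2 → x3 ≠ y3 →
      ¬(x1 = x2 ∧ y1 = y2) → ¬(x1 = y2 ∧ y1 = x2) →
      ¬(x1 = x3 ∧ y1 = y3) → ¬(x1 = y3 ∧ y1 = x3) →
      ¬(x2 = x3 ∧ y2 = y3) → ¬(x2 = y3 ∧ y2 = x3) →
      f x1 y1 ≠ 1 → f x2 y2 ≠ 1 → f x3 y3 ≠ 1 → False)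
    (KT : ∀ x y z w : α, M x → M y → M z → M w → Q x → Q y → Q z → Q w →
      y ≠ z → y ≠ w → z ≠ w →
      f x y = 1 → f x z = 1 → f y z = 1 → f w x = 1 → False)
    (KC : ∀ x y z w : α, M x → M y → M z → M w → Q x → Q y → Q z → Q w →
      x ≠ z → y ≠ w →
      f x y = 1 → f y z = 1 → f z w = 1 → f x w = 1 → False) : False := by
  by_cases T1 : f a b = 1 ∧ f a c = 1 ∧ f b c = 1
  · obtain ⟨t1, t2, t3⟩ := T1
    have hedge : f d a = 1 ∨ f d b = 1 ∨ f d c = 1 := by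
      by_contra h
      push_neg at h
      exact no3 d a d b d c hdS haS hdS hbS hdS hcS (Ne.symm had') (Ne.symm hbd')
        (Ne.symm hcd') (by tauto) (by tauto) (by tauto) (by tauto) (by tauto) (by tauto)
        h.1 h.2.1 h.2.2
    rcases hedge with h | h | h
    · exact KT a b c d haS hbS hcS hdS hae hbe hce hde hbc' hbd' hcd' t1 t2 t3 h
    · exact KT b a c d hbS haS hcS hdS hbe hae hce hde hac' had' hcd'
        (by rwa [hfc _ _]) t3 t2 h
    · exact KT c a b d hcS haS hbS hdS hce hae hbe hde hab' had' hbd'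
        (by rwa [hfc _ _]) (by rwa [hfc _ _]) t1 h
  · by_cases T2 : f a b = 1 ∧ f a d = 1 ∧ f b d = 1
    · obtain ⟨t1, t2, t3⟩ := T2
      have hedge : f c a = 1 ∨ f c b = 1 ∨ f c d = 1 := by
        by_contra h
        push_neg at h
        exact no3 c a c b c d hcS haS hcS hbS hcS hdS (Ne.symm hac') (Ne.symm hbc')
          hcd' (by tauto) (by tauto) (by tauto) (by tauto) (by tauto) (by tauto)
          h.1 h.2.1 h.2.2
      rcases hedge with h | h | h
      · exact KT a b d c haS hbS hdS hcS hae hbe hde hce hbd' hbc' (Ne.symm hcd')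
          t1 t2 t3 h
      · exact KT b a d c hbS haS hdS hcS hbe hae hde hce had' hac' (Ne.symm hcd')
          (by rwa [hfc _ _]) t3 t2 h
      · exact KT d a b c hdS haS hbS hcS hde hae hbe hce hab' hac' hbc'
          (by rwa [hfc _ _]) (by rwa [hfc _ _]) t1 h
    · by_cases T3 : f a c = 1 ∧ f a d = 1 ∧ f c d = 1
      · obtain ⟨t1, t2, t3⟩ := T3
        have hedge : f b a = 1 ∨ f b c = 1 ∨ f b d = 1 := by
          by_contra h
          push_neg at h
          exact no3 b a b c b d hbS haS hbS hcS hbS hdS (Ne.symm hab') hbc'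
            hbd' (by tauto) (by tauto) (by tauto) (by tauto) (by tauto) (by tauto)
            h.1 h.2.1 h.2.2
        rcases hedge with h | h | h
        · exact KT a c d b haS hcS hdS hbS hae hce hde hbe hcd' (Ne.symm hbc')
            (Ne.symm hbd') t1 t2 t3 h
        · exact KT c a d b hcS haS hdS hbS hce hae hde hbe had' hab' (Ne.symm hbd')
            (by rwa [hfc _ _]) t3 t2 h
        · exact KT d a c b hdS haS hcS hbS hde hae hce hbe hac' hab' (Ne.symm hbc')
            (by rwa [hfc _ _]) (by rwa [hfc _ _]) t1 h
      · by_cases T4 : f b c = 1 ∧ f b d = 1 ∧ f c d = 1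
        · obtain ⟨t1, t2, t3⟩ := T4
          have hedge : f a b = 1 ∨ f a c = 1 ∨ f a d = 1 := by
            by_contra h
            push_neg at h
            exact no3 a b a c a d haS hbS haS hcS haS hdS hab' hac'
              had' (by tauto) (by tauto) (by tauto) (by tauto) (by tauto) (by tauto)
              h.1 h.2.1 h.2.2
          rcases hedge with h | h | h
          · exact KT b c d a hbS hcS hdS haS hbe hce hde hae hcd' (Ne.symm hac')
              (Ne.symm had') t1 t2 t3 h
          · exact KT c b d a hcS hbS hdS haS hce hbe hde hae hbd' (Ne.symm hab')
              (Ne.symm had') (by rwa [hfc _ _]) t3 t2 h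
          · exact KT d b c a hdS hbS hcS haS hde hbe hce hae hbc' (Ne.symm hab')
              (Ne.symm hac') (by rwa [hfc _ _]) (by rwa [hfc _ _]) t1 h
        · -- no unit triangle among a b c d
          by_cases Hab : f a b = 1
          · by_cases Hac : f a c = 1
            · have Hbc : f b c ≠ 1 := fun h => T1 ⟨Hab, Hac, h⟩
              by_cases Had : f a d = 1
              · have Hbd : f b d ≠ 1 := fun h => T2 ⟨Hab, Had, h⟩
                have Hcd : f c d = 1 := by
                  by_contra h
                  exact no3 b c b d c d hbS hcS hbS hdS hcS hdS hbc' hbd' hcd'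
                    (by tauto) (by tauto) (by tauto) (by tauto) (by tauto) (by tauto)
                    Hbc Hbd h
                exact T3 ⟨Hac, Had, Hcd⟩
              · -- bads: (a,d), (b,c)
                have Hbd : f b d = 1 := by
                  by_contra h
                  exact no3 a d b c b d haS hdS hbS hcS hbS hdS had' hbc' hbd'
                    (by tauto) (by tauto) (by tauto) (by tauto) (by tauto) (by tauto)
                    Had Hbc h
                have Hcd : f c d = 1 := by
                  by_contra h
                  exact no3 a d b c c d haS hdS hbS hcS hcS hdS had' hbc' hcd'
                    (by tauto) (by tauto) (by tauto) (by tauto) (by tauto) (by tauto)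
                    Had Hbc h
                -- C4 : a-b-d-c-a
                exact KC a b d c haS hbS hdS hcS hae hbe hde hce had' hbc'
                  Hab Hbd (by rwa [hfc _ _] at Hcd) Hac
            · -- bad (a,c)
              by_cases Had : f a d = 1
              · have Hbd : f b d ≠ 1 := fun h => T2 ⟨Hab, Had, h⟩
                have Hbc : f b c = 1 := by
                  by_contra h
                  exact no3 a c b d b c haS hcS hbS hdS hbS hcS hac' hbd' hbc'
                    (by tauto) (by tauto) (by tauto) (by tauto) (by tauto) (by tauto)
                    Hac Hbd h
                have Hcd : f c d = 1 := by
                  by_contra h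
                  exact no3 a c b d c d haS hcS hbS hdS hcS hdS hac' hbd' hcd'
                    (by tauto) (by tauto) (by tauto) (by tauto) (by tauto) (by tauto)
                    Hac Hbd h
                -- C4 : a-b-c-d-a
                exact KC a b c d haS hbS hcS hdS hae hbe hce hde hac' hbd'
                  Hab Hbc Hcd Had
              · -- bads (a,c), (a,d): then b c d all unit -> triangle T4
                have Hbc : f b c = 1 := by
                  by_contra h
                  exact no3 a c a d b c haS hcS haS hdS hbS hcS hac' had' hbc'
                    (by tauto) (by tauto) (by tauto) (by tauto) (by tauto) (by tauto)
                    Hac Had h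
                have Hbd : f b d = 1 := by
                  by_contra h
                  exact no3 a c a d b d haS hcS haS hdS hbS hdS hac' had' hbd'
                    (by tauto) (by tauto) (by tauto) (by tauto) (by tauto) (by tauto)
                    Hac Had h
                have Hcd : f c d = 1 := by
                  by_contra h
                  exact no3 a c a d c d haS hcS haS hdS hcS hdS hac' had' hcd'
                    (by tauto) (by tauto) (by tauto) (by tauto) (by tauto) (by tauto)
                    Hac Had h
                exact T4 ⟨Hbc, Hbd, Hcd⟩
          · -- bad (a,b)
            by_cases Hcd : f c d = 1
            · -- from no triangle acd: bad ac or ad ; from bcd : bad bc or bd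
              have h1 : f a c ≠ 1 ∨ f a d ≠ 1 := by
                by_contra h
                push_neg at h
                exact T3 ⟨h.1, h.2, Hcd⟩
              have h2 : f b c ≠ 1 ∨ f b d ≠ 1 := by
                by_contra h
                push_neg at h
                exact T4 ⟨h.1, h.2, Hcd⟩
              rcases h1 with h1 | h1 <;> rcases h2 with h2 | h2
              · exact no3 a b a c b c haS hbS haS hcS hbS hcS hab' hac' hbc'
                  (by tauto) (by tauto) (by tauto) (by tauto) (by tauto) (by tauto)
                  Hab h1 h2
              · exact no3 a b a c b d haS hbS haS hcS hbS hdS hab' hac' hbd'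
                  (by tauto) (by tauto) (by tauto) (by tauto) (by tauto) (by tauto)
                  Hab h1 h2
              · exact no3 a b a d b c haS hbS haS hdS hbS hcS hab' had' hbc'
                  (by tauto) (by tauto) (by tauto) (by tauto) (by tauto) (by tauto)
                  Hab h1 h2
              · exact no3 a b a d b d haS hbS haS hdS hbS hdS hab' had' hbd'
                  (by tauto) (by tauto) (by tauto) (by tauto) (by tauto) (by tauto)
                  Hab h1 h2
            · -- bads (a,b), (c,d): everything else unit, C4 a-c-b-d-a
              have Hac : f a c = 1 := by
                by_contra h
                exact no3 a b c d a c haS hbS hcS hdS haS hcS hab' hcd' hac'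
                  (by tauto) (by tauto) (by tauto) (by tauto) (by tauto) (by tauto)
                  Hab Hcd h
              have Had : f a d = 1 := by
                by_contra h
                exact no3 a b c d a d haS hbS hcS hdS haS hdS hab' hcd' had'
                  (by tauto) (by tauto) (by tauto) (by tauto) (by tauto) (by tauto)
                  Hab Hcd h
              have Hbc : f b c = 1 := by
                by_contra h
                exact no3 a b c d b c haS hbS hcS hdS hbS hcS hab' hcd' hbc'
                  (by tauto) (by tauto) (by tauto) (by tauto) (by tauto) (by tauto)
                  Hab Hcd h
              have Hbd : f b d = 1 := by
                by_contra h
                exact no3 a b c d b d haS hbS hcS hdS hbS hdS hab' hcd' hbd'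
                  (by tauto) (by tauto) (by tauto) (by tauto) (by tauto) (by tauto)
                  Hab Hcd h
              exact KC a c b d haS hcS hbS hdS hae hce hbe hde hab' hcd'
                Hac (by rwa [hfc _ _] at Hbc) Hbd Had

open Classical in
/-- Number of ordered pairs of distinct points of `S` at distance exactly `1`
(twice the number of unordered such pairs). -/
noncomputable def unitPairs {d : ℕ} (S : Finset (EuclideanSpace ℝ (Fin d))) : ℕ :=
  (S.offDiag.filter fun p => dist p.1 p.2 = 1).card

/-- Five points of diameter 1 on a 2-sphere in ℝ³ have at most 7 diameter pairs. -/
theorem stmt_8 (S : Finset (EuclideanSpace ℝ (Fin 3)))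
    (hcard : S.card = 5)
    (hsphere : ∃ (c : EuclideanSpace ℝ (Fin 3)) (r : ℝ), ∀ x ∈ S, dist x c = r)
    (hdiam : ∀ x ∈ S, ∀ y ∈ S, dist x y ≤ 1)
    (hattain : ∃ x ∈ S, ∃ y ∈ S, dist x y = 1) :
    unitPairs S ≤ 2 * 7 := by
  classical
  by_contra hlt
  push_neg at hlt
  obtain ⟨c0, r, hc0⟩ := hsphere
  set N := S.offDiag.filter (fun p => ¬ (dist p.1 p.2 = 1)) with hNdef
  have hNP : (S.offDiag.filter (fun p => dist p.1 p.2 = 1)).card + N.card = S.offDiag.card :=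
    Finset.card_filter_add_card_filter_not _
  have hoff : S.offDiag.card = 20 := by rw [Finset.offDiag_card, hcard]
  have hUP : unitPairs S = (S.offDiag.filter (fun p => dist p.1 p.2 = 1)).card := by
    simp [unitPairs]
  have hN5 : N.card ≤ 5 := by omega
  have hsymN : ∀ p ∈ N, Prod.swap p ∈ N := by
    intro p hp
    rw [hNdef, Finset.mem_filter, Finset.mem_offDiag] at hp ⊢
    obtain ⟨⟨h1, h2, h3⟩, h4⟩ := hp
    exact ⟨⟨h2, h1, Ne.symm h3⟩, by rwa [Prod.fst_swap, Prod.snd_swap, dist_comm]⟩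
  have hneN : ∀ p ∈ N, p.1 ≠ p.2 := by
    intro p hp
    rw [hNdef, Finset.mem_filter, Finset.mem_offDiag] at hp
    exact hp.1.2.2
  have hNeven : Even N.card := even_card_of_symm N.card N rfl hsymN hneN
  have hN4 : N.card ≤ 4 := by
    obtain ⟨k, hk⟩ := hNeven; omega
  -- membership builder for bad pairs
  have memN : ∀ x y : EuclideanSpace ℝ (Fin 3), x ∈ S → y ∈ S → x ≠ y →
      dist x y ≠ 1 → (x, y) ∈ N := by
    intro x y hx hy hxy hbad
    rw [hNdef, Finset.mem_filter, Finset.mem_offDiag]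
    exact ⟨⟨hx, hy, hxy⟩, hbad⟩
  -- no three distinct bad unordered pairs
  have no3 : ∀ x1 y1 x2 y2 x3 y3 : EuclideanSpace ℝ (Fin 3),
      x1 ∈ S → y1 ∈ S → x2 ∈ S → y2 ∈ S → x3 ∈ S → y3 ∈ S →
      x1 ≠ y1 → x2 ≠ y2 → x3 ≠ y3 →
      ¬(x1 = x2 ∧ y1 = y2) → ¬(x1 = y2 ∧ y1 = x2) →
      ¬(x1 = x3 ∧ y1 = y3) → ¬(x1 = y3 ∧ y1 = x3) →
      ¬(x2 = x3 ∧ y2 = y3) → ¬(x2 = y3 ∧ y2 = x3) →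
      dist x1 y1 ≠ 1 → dist x2 y2 ≠ 1 → dist x3 y3 ≠ 1 → False := by
    intro x1 y1 x2 y2 x3 y3 hx1 hy1 hx2 hy2 hx3 hy3 hne1 hne2 hne3
      d12 d12' d13 d13' d23 d23' b1 b2 b3
    exact no_three_bad hN4 hsymN (memN _ _ hx1 hy1 hne1 b1) (memN _ _ hx2 hy2 hne2 b2)
      (memN _ _ hx3 hy3 hne3 b3) hne1 hne2 hne3 d12 d12' d13 d13' d23 d23'
  -- a clean pivot exists
  obtain ⟨e, heS, hclean⟩ : ∃ e ∈ S, ∀ x ∈ S, x ≠ e → dist e x = 1 := by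
    by_contra hno
    push_neg at hno
    have hno' : ∀ v : EuclideanSpace ℝ (Fin 3), ∃ w : EuclideanSpace ℝ (Fin 3),
        v ∈ S → (w ∈ S ∧ w ≠ v ∧ dist v w ≠ 1) := by
      intro v
      by_cases hv : v ∈ S
      · obtain ⟨w, hw1, hw2, hw3⟩ := hno v hv
        exact ⟨w, fun _ => ⟨hw1, hw2, hw3⟩⟩
      · exact ⟨v, fun h => absurd h hv⟩
    choose f hf using hno'
    have hmap : ∀ v ∈ S, (v, f v) ∈ N := by
      intro v hv
      obtain ⟨h1, h2, h3⟩ := hf v hv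
      exact memN v (f v) hv h1 (Ne.symm h2) h3
    have hinj : Set.InjOn (fun v => (v, f v)) S := by
      intro u _ v _ h
      exact (Prod.ext_iff.mp h).1
    have := Finset.card_le_card_of_injOn _ hmap hinj
    omega
  -- extract the other four points
  have hS' : (S.erase e).card = 3 + 1 := by
    rw [Finset.card_erase_of_mem heS, hcard]
  obtain ⟨a, T, haT, hins, hT3⟩ := Finset.card_eq_succ.mp hS'
  obtain ⟨b, c, d, hbc', hbd', hcd', hTeq⟩ := Finset.card_eq_three.mp hT3
  have hbT : b ∈ T := by rw [hTeq]; simp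
  have hcT : c ∈ T := by rw [hTeq]; simp
  have hdT : d ∈ T := by rw [hTeq]; simp
  have haS' : a ∈ S.erase e := by rw [← hins]; exact Finset.mem_insert_self _ _
  have hbS' : b ∈ S.erase e := by rw [← hins]; exact Finset.mem_insert_of_mem hbT
  have hcS' : c ∈ S.erase e := by rw [← hins]; exact Finset.mem_insert_of_mem hcT
  have hdS' : d ∈ S.erase e := by rw [← hins]; exact Finset.mem_insert_of_mem hdT
  have haS : a ∈ S := Finset.mem_of_mem_erase haS'
  have hbS : b ∈ S := Finset.mem_of_mem_erase hbS'
  have hcS : c ∈ S := Finset.mem_of_mem_erase hcS'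
  have hdS : d ∈ S := Finset.mem_of_mem_erase hdS'
  have hae : a ≠ e := Finset.ne_of_mem_erase haS'
  have hbe : b ≠ e := Finset.ne_of_mem_erase hbS'
  have hce : c ≠ e := Finset.ne_of_mem_erase hcS'
  have hde : d ≠ e := Finset.ne_of_mem_erase hdS'
  have hab' : a ≠ b := fun h => haT (h ▸ hbT)
  have hac' : a ≠ c := fun h => haT (h ▸ hcT)
  have had' : a ≠ d := fun h => haT (h ▸ hdT)
  -- inner product facts
  have hsq : ∀ x ∈ S, ⟪x - c0, x - c0⟫ = r^2 := by
    intro x hx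
    rw [real_inner_self_eq_norm_sq, ← dist_eq_norm, hc0 x hx]
  have hu : ∀ x y : EuclideanSpace ℝ (Fin 3), x ∈ S → y ∈ S → dist x y = 1 →
      ⟪x - c0, y - c0⟫ = r^2 - 2⁻¹ := by
    intro x y hx hy h
    have h2 : ‖(x - c0) - (y - c0)‖^2 = 1 := by
      rw [sub_sub_sub_cancel_right, ← dist_eq_norm, h]; norm_num
    rw [norm_sub_sq_real, ← real_inner_self_eq_norm_sq, ← real_inner_self_eq_norm_sq,
      hsq x hx, hsq y hy] at h2
    linarith
  have hle : ∀ x y : EuclideanSpace ℝ (Fin 3), x ∈ S → y ∈ S →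
      r^2 - 2⁻¹ ≤ ⟪x - c0, y - c0⟫ := by
    intro x y hx hy
    have hd1 : dist x y ≤ 1 := hdiam x hx y hy
    have h2 : ‖(x - c0) - (y - c0)‖^2 ≤ 1 := by
      rw [sub_sub_sub_cancel_right, ← dist_eq_norm]
      nlinarith [dist_nonneg (x := x) (y := y)]
    rw [norm_sub_sq_real, ← real_inner_self_eq_norm_sq, ← real_inner_self_eq_norm_sq,
      hsq x hx, hsq y hy] at h2
    linarith
  have hvne : ∀ x y : EuclideanSpace ℝ (Fin 3), x ≠ y → x - c0 ≠ y - c0 := by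
    intro x y h hh
    exact h (sub_left_inj.mp hh)
  -- the two geometric killers, specialised
  have KT : ∀ x y z w : EuclideanSpace ℝ (Fin 3), x ∈ S → y ∈ S → z ∈ S → w ∈ S →
      x ≠ e → y ≠ e → z ≠ e → w ≠ e → y ≠ z → y ≠ w → z ≠ w →
      dist x y = 1 → dist x z = 1 → dist y z = 1 → dist w x = 1 → False := by
    intro x y z w hx hy hz hw hxe hye hze hwe hyz hyw hzw h1 h2 h3 h4
    obtain ⟨g0, g1, g2, g3, hs1, hn1⟩ := dep4 (e - c0) (x - c0) (y - c0) (z - c0)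
    obtain ⟨f0, f1, f2, f3, hs2, hn2⟩ :=
      dep4 (e - c0) (x - c0) ((y - c0) - (z - c0)) ((y - c0) - (w - c0))
    exact K1 hs1 hn1 hs2 hn2 (hsq e heS) (hsq x hx) (hsq y hy) (hsq z hz) (hsq w hw)
      (hu e x heS hx (hclean x hx hxe)) (hu e y heS hy (hclean y hy hye))
      (hu e z heS hz (hclean z hz hze)) (hu e w heS hw (hclean w hw hwe))
      (hu x y hx hy h1) (hu x z hx hz h2) (hu y z hy hz h3)
      (hu x w hx hw (by rwa [dist_comm] at h4))
      (hvne y w hyw) (hvne z w hzw)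
  have KC : ∀ x y z w : EuclideanSpace ℝ (Fin 3), x ∈ S → y ∈ S → z ∈ S → w ∈ S →
      x ≠ e → y ≠ e → z ≠ e → w ≠ e → x ≠ z → y ≠ w →
      dist x y = 1 → dist y z = 1 → dist z w = 1 → dist x w = 1 → False := by
    intro x y z w hx hy hz hw hxe hye hze hwe hxz hyw h1 h2 h3 h4
    obtain ⟨g0, g1, g2, g3, hs1, hn1⟩ :=
      dep4 (e - c0) ((x - c0) - (z - c0))
        ((r^2) • (y - c0) - (r^2 - 2⁻¹) • (e - c0))
        ((r^2) • (w - c0) - (r^2 - 2⁻¹) • (e - c0))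
    exact K2 hs1 hn1 (hsq e heS) (hsq x hx) (hsq y hy) (hsq z hz) (hsq w hw)
      (hu e x heS hx (hclean x hx hxe)) (hu e y heS hy (hclean y hy hye))
      (hu e z heS hz (hclean z hz hze)) (hu e w heS hw (hclean w hw hwe))
      (hu x y hx hy h1) (hu y z hy hz h2) (hu z w hz hw h3)
      (hu x w hx hw h4) (hle y w hy hw) (hvne x z hxz) (hvne y w hyw)
  exact core (fun x => x ∈ S) (fun x => x ≠ e) dist a b c d haS hbS hcS hdS
    hae hbe hce hde hab' hac' had' hbc' hbd' hcd' (fun x y => dist_comm x y) no3 KT KC
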